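/- Let w be the apex (at the origin) of the cone in ℝ^d over the ball B = ball(p, r), where p = (a, 0, …, 0, s) with s > r ≥ 0 and a ∈ ℝ (so s² + a² > r²). For t with r ≤ t < s, the volume of the intersection of this cone with the slab {x ∈ ℝ^d : 0 ≤ x_d ≤ s − t} is at least (1/d)·C_{d−1}·r^{d−1}·(s−t)^d / (s² − r²)^{(d−1)/2}, where C_{d−1} is the volume of the unit (d−1)-ball. -/

import Mathlib

open MeasureTheory


theorem algA (a s r l X : ℝ) (hr : 0 ≤ r) (hsr : r < s) (hl : 0 < l)
    (hXc : (X - l*a*s/(s^2-r^2))^2 ≤ l^2*r^2/(s^2-r^2)) : 0 < a*X + l*s := by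
  have hs : 0 < s := lt_of_le_of_lt hr hsr
  have hb : 0 < s^2 - r^2 := by nlinarith
  set c : ℝ := l*a*s/(s^2-r^2) with hc
  have h4 : 0 < a*c + l*s := by
    have : a*c + l*s = l*s*(a^2+(s^2-r^2))/(s^2-r^2) := by rw [hc]; field_simp
    rw [this]; positivity
  have h3 : (a*(X - c))^2 < (a*c + l*s)^2 := by
    have h1 : (a*(X-c))^2 ≤ a^2 * (l^2*r^2/(s^2-r^2)) := by nlinarith [sq_nonneg a]
    have h2 : a^2 * (l^2*r^2/(s^2-r^2)) < (a*c + l*s)^2 := by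
      have he : a*c + l*s = l*s*(a^2+(s^2-r^2))/(s^2-r^2) := by rw [hc]; field_simp
      have h2s : (0:ℝ) ≤ 2*s^2 - r^2 := by nlinarith
      rw [he, div_pow, mul_div_assoc', div_lt_div_iff₀ hb (by positivity)]
      nlinarith [mul_nonneg (mul_pos hl hl).le (mul_nonneg (mul_nonneg (sq_nonneg a) hb.le) h2s),
        mul_nonneg (mul_pos hl hl).le (mul_nonneg (mul_pos hs hs).le (sq_nonneg (a^2))),
        mul_pos (mul_pos (mul_pos hl hl) (mul_pos hs hs)) (mul_pos hb hb), mul_pos hb hb]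
    linarith
  have h5 : -(a*c+l*s) < a*(X-c) := by nlinarith
  nlinarith [h5]


set_option maxHeartbeats 1000000 in

theorem algB (a s r l X t : ℝ) (hr : 0 ≤ r) (hsr : r < s) (hl : 0 ≤ l) (ht1 : r ≤ t) (hlt : l ≤ s - t)
    (hXc : (X - l*a*s/(s^2-r^2))^2 ≤ l^2*r^2/(s^2-r^2)) : a*X + l*s ≤ a^2 + s^2 - r^2 := by
  have hs : 0 < s := lt_of_le_of_lt hr hsr
  have hb : 0 < s^2 - r^2 := by nlinarith
  have hb' : (s^2-r^2) ≠ 0 := ne_of_gt hb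
  have hls : l ≤ s - r := by linarith
  set c : ℝ := l*a*s/(s^2-r^2) with hc
  have hRb : (a^2+s^2-r^2 - (a*c + l*s)) * (s^2-r^2) = (a^2+(s^2-r^2))*((s^2-r^2) - l*s) := by
    rw [hc]; field_simp; ring
  clear_value c
  have hbls : (s^2-r^2) - l*s ≥ r*l := by nlinarith
  have hbls0 : 0 ≤ (s^2-r^2) - l*s := le_trans (mul_nonneg hr hl) hbls
  have hR : 0 ≤ a^2+s^2-r^2 - (a*c + l*s) := by
    have h0 : 0 ≤ (a^2+(s^2-r^2))*((s^2-r^2) - l*s) := by positivity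
    nlinarith
  have hXb : (X-c)^2 * (s^2-r^2) ≤ l^2*r^2 := by
    have := mul_le_mul_of_nonneg_right hXc hb.le
    rwa [div_mul_cancel₀ _ hb'] at this
  have h1 : (a*(X-c))^2 * (s^2-r^2) ≤ a^2 * (l^2*r^2) := by
    calc (a*(X-c))^2 * (s^2-r^2) = a^2*((X-c)^2*(s^2-r^2)) := by ring
      _ ≤ a^2*(l^2*r^2) := mul_le_mul_of_nonneg_left hXb (sq_nonneg a)
  have hq : r^2*l^2 ≤ ((s^2-r^2) - l*s)^2 := by nlinarith [mul_nonneg hr hl]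
  have h2 : a^2*(l^2*r^2)*(s^2-r^2) ≤ ((a^2+(s^2-r^2))*((s^2-r^2)-l*s))^2 := by
    have P1 : 0 ≤ (a^2-(s^2-r^2))^2 * ((s^2-r^2)-l*s)^2 := by positivity
    have P2 : a^2*(s^2-r^2)*(r^2*l^2) ≤ a^2*(s^2-r^2)*((s^2-r^2)-l*s)^2 :=
      mul_le_mul_of_nonneg_left hq (by positivity)
    nlinarith [P1, P2, mul_nonneg (mul_nonneg (mul_nonneg (sq_nonneg a) hb.le) (sq_nonneg r)) (sq_nonneg l)]
  have hsq : (a*(X - c))^2 ≤ (a^2+s^2-r^2 - (a*c + l*s))^2 := by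
    have h3 : (a*(X-c))^2 * (s^2-r^2)^2 ≤ (a^2+s^2-r^2 - (a*c + l*s))^2 * (s^2-r^2)^2 := by
      have e : (a^2+s^2-r^2 - (a*c + l*s))^2 * (s^2-r^2)^2 = ((a^2+(s^2-r^2))*((s^2-r^2) - l*s))^2 := by
        rw [← hRb]; ring
      rw [e]
      calc (a*(X-c))^2 * (s^2-r^2)^2 = ((a*(X-c))^2*(s^2-r^2))*(s^2-r^2) := by ring
        _ ≤ (a^2*(l^2*r^2))*(s^2-r^2) := mul_le_mul_of_nonneg_right h1 hb.le
        _ ≤ ((a^2+(s^2-r^2))*((s^2-r^2) - l*s))^2 := h2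
    have hb2 : (0:ℝ) < (s^2-r^2)^2 := pow_pos hb 2
    exact le_of_mul_le_mul_right h3 hb2
  have hfin : a*(X-c) ≤ a^2+s^2-r^2 - (a*c + l*s) := by nlinarith [hsq, hR]
  nlinarith [hfin]

set_option maxHeartbeats 1000000 in
theorem algC (a s r l X S : ℝ) (hr : 0 ≤ r) (hsr : r < s)
    (hsum : S ≤ l^2*r^2/(s^2-r^2) + 2*(l*a*s/(s^2-r^2))*X - (l*a*s/(s^2-r^2))^2) :
    (l^2 + S)*(a^2+s^2-r^2) ≤ (a*X+l*s)^2 := by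
  have hs : 0 < s := lt_of_le_of_lt hr hsr
  have hb : 0 < s^2 - r^2 := by nlinarith
  have hb' : (s^2 - r^2) ≠ 0 := ne_of_gt hb
  have hQ : (0:ℝ) < a^2+s^2-r^2 := by nlinarith
  have key : (a*X+l*s)^2 - (l^2 + (l^2*r^2/(s^2-r^2) + 2*(l*a*s/(s^2-r^2))*X - (l*a*s/(s^2-r^2))^2))*(a^2+s^2-r^2)
      = a^2*(X - l*a*s/(s^2-r^2))^2 := by field_simp; ring
  nlinarith [mul_le_mul_of_nonneg_right hsum hQ.le, mul_nonneg (sq_nonneg a) (sq_nonneg (X - l*a*s/(s^2-r^2)))]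

set_option maxHeartbeats 1000000 in
theorem incl {d : ℕ} [NeZero d] (a s r t : ℝ) (hr : 0 ≤ r) (hsr : r < s)
    (ht1 : r ≤ t) (ht2 : t < s)
    (p : EuclideanSpace ℝ (Fin (d + 1)))
    (hp : ∀ i : Fin (d + 1),
      p i = if i = Fin.last d then s else if i = (0 : Fin (d + 1)) then a else 0)
    (z : EuclideanSpace ℝ (Fin (d+1)))
    (h1 : 0 ≤ z (Fin.last d)) (h2 : z (Fin.last d) ≤ s - t)
    (h3 : ∑ i : Fin d, (z i.castSucc - (if i = 0 then z (Fin.last d)*a*s/(s^2-r^2) else 0))^2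
        ≤ (z (Fin.last d))^2*r^2/(s^2-r^2)) :
    ∃ μ ∈ Set.Icc (0:ℝ) 1, ∃ y ∈ Metric.closedBall p r, z = μ • y := by
  have hs : 0 < s := lt_of_le_of_lt hr hsr
  have hb : 0 < s^2 - r^2 := by nlinarith
  have hb' : (s^2-r^2) ≠ 0 := ne_of_gt hb
  have hQ : (0:ℝ) < a^2+s^2-r^2 := by nlinarith
  set l : ℝ := z (Fin.last d) with hl
  set c : ℝ := l*a*s/(s^2-r^2) with hc
  set X : ℝ := z ((0 : Fin d).castSucc) with hX
  set S : ℝ := ∑ i : Fin d, (z i.castSucc)^2 with hS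
  -- expand the quadratic constraint
  have hterm : ∀ i : Fin d, (z i.castSucc - (if i = 0 then c else 0))^2
      = (z i.castSucc)^2 - (if i = 0 then 2*(c * z i.castSucc) else 0) + (if i = 0 then c^2 else 0) := by
    intro i; by_cases h : i = 0 <;> simp [h] <;> ring
  have hexp : ∑ i : Fin d, (z i.castSucc - (if i = 0 then c else 0))^2
      = S - 2*(c*X) + c^2 := by
    rw [Finset.sum_congr rfl (fun i _ => hterm i)]
    rw [Finset.sum_add_distrib, Finset.sum_sub_distrib,
      Finset.sum_ite_eq' Finset.univ (0 : Fin d) (fun i => 2*(c * z i.castSucc)),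
      Finset.sum_ite_eq' Finset.univ (0 : Fin d) (fun _ => c^2)]
    simp only [Finset.mem_univ, if_true]
    rfl
  have hsum : S ≤ l^2*r^2/(s^2-r^2) + 2*c*X - c^2 := by
    rw [hexp] at h3; linarith
  -- single-coordinate bound
  have h30 := Finset.single_le_sum
    (f := fun i : Fin d => (z i.castSucc - (if i = 0 then c else 0))^2)
    (fun i _ => sq_nonneg _) (Finset.mem_univ (0 : Fin d))
  have hXc : (X - c)^2 ≤ l^2*r^2/(s^2-r^2) := by
    refine le_trans ?_ h3
    simpa [hX] using h30
  -- norms and inner products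
  have hnz : ‖z‖^2 = S + l^2 := by
    rw [EuclideanSpace.norm_eq, Real.sq_sqrt (by positivity)]
    simp only [Real.norm_eq_abs, sq_abs]
    rw [Fin.sum_univ_castSucc (fun i => (z i)^2), ← hS, ← hl]
  have hip : (inner ℝ z p : ℝ) = a*X + l*s := by
    simp only [PiLp.inner_apply, RCLike.inner_apply', conj_trivial]
    calc ∑ i, z i * p i
        = ∑ i, z i * (if i = Fin.last d then s else if i = (0 : Fin (d+1)) then a else 0) := by
          refine Finset.sum_congr rfl fun i _ => by rw [hp i]
      _ = (∑ i : Fin d, z i.castSucc * (if i.castSucc = Fin.last d then s else if i.castSucc = (0 : Fin (d+1)) then a else 0))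
          + z (Fin.last d) * (if Fin.last d = Fin.last d then s else if Fin.last d = (0 : Fin (d+1)) then a else 0) := by
          rw [Fin.sum_univ_castSucc]
      _ = (∑ i : Fin d, if i = 0 then z i.castSucc * a else 0) + l*s := by
          rw [if_pos rfl, ← hl]
          congr 1
          refine Finset.sum_congr rfl fun i _ => ?_
          rw [if_neg (Fin.ne_last_of_lt (Fin.castSucc_lt_last i))]
          by_cases h : i = 0
          · rw [if_pos (by rw [h, Fin.castSucc_zero']), if_pos h]
          · rw [if_neg (fun hh => h (Fin.castSucc_eq_zero_iff.mp hh)), if_neg h, mul_zero]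
      _ = a*X + l*s := by
          rw [Finset.sum_ite_eq' Finset.univ (0 : Fin d) (fun i => z i.castSucc * a)]
          simp only [Finset.mem_univ, if_true]
          rw [← hX]; ring
  have hnp : ‖p‖^2 = a^2 + s^2 := by
    rw [EuclideanSpace.norm_eq, Real.sq_sqrt (by positivity)]
    simp only [Real.norm_eq_abs, sq_abs]
    rw [Fin.sum_univ_castSucc (fun i => (p i)^2)]
    have e1 : ∀ i : Fin d, (p i.castSucc)^2 = if i = 0 then a^2 else 0 := by
      intro i
      rw [hp, if_neg (Fin.ne_last_of_lt (Fin.castSucc_lt_last i))]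
      by_cases h : i = 0
      · rw [if_pos (by rw [h, Fin.castSucc_zero']), if_pos h]
      · rw [if_neg (fun hh => h (Fin.castSucc_eq_zero_iff.mp hh)), if_neg h]; ring
    rw [Finset.sum_congr rfl (fun i _ => e1 i),
      Finset.sum_ite_eq' Finset.univ (0 : Fin d) (fun _ => a^2),
      hp (Fin.last d), if_pos rfl]
    simp
  rcases eq_or_lt_of_le h1 with h0 | hlpos
  · -- degenerate case: z = 0
    have hl0 : l = 0 := h0.symm
    have hc0 : c = 0 := by rw [hc, hl0]; simp
    have hS0 : S ≤ 0 := by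
      rw [hl0, hc0] at hsum; simpa using hsum
    have hco : ∀ i : Fin d, z i.castSucc = 0 := by
      intro i
      have hterm' : (z i.castSucc)^2 ≤ S :=
        Finset.single_le_sum (f := fun i : Fin d => (z i.castSucc)^2)
          (fun i _ => sq_nonneg _) (Finset.mem_univ i)
      nlinarith [sq_nonneg (z i.castSucc)]
    have hz0 : z = 0 := by
      ext i
      refine Fin.lastCases ?_ ?_ i
      · show z (Fin.last d) = (0 : EuclideanSpace ℝ (Fin (d+1))) (Fin.last d)
        simp only [PiLp.zero_apply]
        rw [← hl]; exact hl0
      · intro j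
        show z j.castSucc = (0 : EuclideanSpace ℝ (Fin (d+1))) j.castSucc
        simp only [PiLp.zero_apply]
        exact hco j
    refine ⟨0, ⟨le_refl _, by norm_num⟩, p, Metric.mem_closedBall_self hr, ?_⟩
    rw [hz0, zero_smul]
  · -- main case
    rw [hc] at hXc
    have hipos : 0 < a*X + l*s := algA a s r l X hr hsr hlpos hXc
    have hilQ : a*X + l*s ≤ a^2+s^2-r^2 := algB a s r l X t hr hsr h1 ht1 h2 hXc
    set μ : ℝ := (a*X + l*s)/(a^2+s^2-r^2) with hμ
    have hμ0 : 0 < μ := div_pos hipos hQ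
    have hμ1 : μ ≤ 1 := (div_le_one hQ).mpr hilQ
    have hμQ : μ*(a^2+s^2-r^2) = a*X + l*s := by
      rw [hμ]; field_simp
    have hcp : (l^2 + S)*(a^2+s^2-r^2) ≤ (a*X+l*s)^2 := by
      refine algC a s r l X S hr hsr ?_
      rw [hc] at hsum; exact hsum
    have hNv : S + l^2 ≤ μ*(a*X+l*s) := by
      have h' : (S+l^2)*(a^2+s^2-r^2) ≤ (μ*(a*X+l*s))*(a^2+s^2-r^2) := by
        nlinarith [hcp, hμQ]
      exact le_of_mul_le_mul_right h' hQ
    have key : ‖z - μ • p‖^2 ≤ (μ*r)^2 := by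
      rw [norm_sub_sq_real, real_inner_smul_right, norm_smul, mul_pow, hip, hnz, hnp,
        Real.norm_eq_abs, sq_abs]
      nlinarith [hNv, hμQ, sq_nonneg μ]
    have hnorm : ‖z - μ • p‖ ≤ μ*r := by
      nlinarith [norm_nonneg (z - μ • p), mul_nonneg hμ0.le hr, key]
    refine ⟨μ, ⟨hμ0.le, hμ1⟩, μ⁻¹ • z, ?_, (smul_inv_smul₀ (ne_of_gt hμ0) z).symm⟩
    rw [Metric.mem_closedBall, dist_eq_norm]
    have e2 : μ⁻¹ • z - p = μ⁻¹ • (z - μ • p) := by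
      rw [smul_sub, smul_smul, inv_mul_cancel₀ (ne_of_gt hμ0), one_smul]
    rw [e2, norm_smul, Real.norm_eq_abs, abs_of_pos (inv_pos.mpr hμ0)]
    calc μ⁻¹ * ‖z - μ • p‖ ≤ μ⁻¹ * (μ*r) := by
          exact mul_le_mul_of_nonneg_left hnorm (inv_pos.mpr hμ0).le
      _ = r := by field_simp

theorem lint_pow (T : ℝ) (hT : 0 ≤ T) (d : ℕ) :
    ∫⁻ x in Set.Icc (0:ℝ) T, ENNReal.ofReal (x^d) = ENNReal.ofReal (T^(d+1)/((d:ℝ)+1)) := by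
  rw [← ofReal_integral_eq_lintegral_ofReal]
  · congr 1
    rw [MeasureTheory.integral_Icc_eq_integral_Ioc, ← intervalIntegral.integral_of_le hT,
      integral_pow]
    norm_num
  · exact (continuous_pow d).integrableOn_Icc
  · filter_upwards [ae_restrict_mem measurableSet_Icc] with x hx
    exact pow_nonneg hx.1 d

set_option maxHeartbeats 1000000

/-- Volume lower bound for the truncated cone: the cone with apex at the origin over
`ball(p, r)`, with `p = (a,0,…,0,s)`, intersected with the slab `0 ≤ x_d ≤ s - t`, has
volume at least `(1/d)·C_{d-1}·r^{d-1}(s-t)^d/(s²-r²)^{(d-1)/2}` (ambient dimension `d+1`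
here, so the formula reads with `d+1` in place of `d`). -/
theorem stmt_5 {d : ℕ} (hd : 1 ≤ d) (a s r t : ℝ) (hr : 0 ≤ r) (hsr : r < s)
    (ht1 : r ≤ t) (ht2 : t < s)
    (p : EuclideanSpace ℝ (Fin (d + 1)))
    (hp : ∀ i : Fin (d + 1),
      p i = if i = Fin.last d then s else if i = (0 : Fin (d + 1)) then a else 0) :
    ENNReal.ofReal ((1 / (d + 1 : ℝ)) *
        (volume (Metric.ball (0 : EuclideanSpace ℝ (Fin d)) 1)).toReal *
        r ^ d * (s - t) ^ (d + 1) / (Real.sqrt (s ^ 2 - r ^ 2)) ^ d) ≤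
      volume ({x : EuclideanSpace ℝ (Fin (d + 1)) |
          ∃ μ ∈ Set.Icc (0 : ℝ) 1, ∃ y ∈ Metric.closedBall p r, x = μ • y} ∩
        {x : EuclideanSpace ℝ (Fin (d + 1)) |
          0 ≤ x (Fin.last d) ∧ x (Fin.last d) ≤ s - t}) := by
  haveI : NeZero d := ⟨by omega⟩
  have hs : 0 < s := lt_of_le_of_lt hr hsr
  have hb : 0 < s^2 - r^2 := by nlinarith
  have hw : 0 < Real.sqrt (s^2-r^2) := Real.sqrt_pos.mpr hb
  set w : ℝ := Real.sqrt (s^2-r^2) with hwdef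
  set ρ : ℝ := r / w with hρdef
  have hρ0 : 0 ≤ ρ := div_nonneg hr hw.le
  have hρ2 : ρ^2 = r^2/(s^2-r^2) := by rw [hρdef, div_pow, hwdef, Real.sq_sqrt hb.le]
  have hT0 : 0 ≤ s - t := by linarith
  set C : ENNReal := volume (Metric.ball (0 : EuclideanSpace ℝ (Fin d)) 1) with hCdef
  -- the pi-space version of the truncated-cone subset
  set S' : Set (Fin (d+1) → ℝ) := {f | (0 ≤ f (Fin.last d) ∧ f (Fin.last d) ≤ s - t) ∧
    ∑ i : Fin d, (f i.castSucc - (if i = 0 then f (Fin.last d)*a*s/(s^2-r^2) else 0))^2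
      ≤ (f (Fin.last d))^2*r^2/(s^2-r^2)} with hS'def
  have m1 : Measurable fun f : Fin (d+1) → ℝ => f (Fin.last d) := measurable_pi_apply _
  have m2 : Measurable fun f : Fin (d+1) → ℝ =>
      ∑ i : Fin d, (f i.castSucc - (if i = 0 then f (Fin.last d)*a*s/(s^2-r^2) else 0))^2 := by
    apply Finset.measurable_sum
    intro i _
    apply Measurable.pow_const
    apply (measurable_pi_apply i.castSucc).sub
    by_cases h : i = 0
    · simp only [h, if_true]
      exact ((m1.mul_const a).mul_const s).div_const (s^2-r^2)
    · simp only [h, if_false]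
      exact measurable_const
  have hmS' : MeasurableSet S' := by
    rw [hS'def, Set.setOf_and, Set.setOf_and]
    exact ((measurableSet_le measurable_const m1).inter (measurableSet_le m1 measurable_const)).inter
      (measurableSet_le m2 (((m1.pow_const 2).mul_const (r^2)).div_const (s^2-r^2)))
  set E : Set (EuclideanSpace ℝ (Fin (d+1))) :=
    (MeasurableEquiv.toLp 2 (Fin (d+1) → ℝ)).symm ⁻¹' S' with hEdef
  -- inclusion into the cone ∩ slab
  have hEsub : E ⊆ ({x : EuclideanSpace ℝ (Fin (d + 1)) |
          ∃ μ ∈ Set.Icc (0 : ℝ) 1, ∃ y ∈ Metric.closedBall p r, x = μ • y} ∩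
        {x : EuclideanSpace ℝ (Fin (d + 1)) |
          0 ≤ x (Fin.last d) ∧ x (Fin.last d) ≤ s - t}) := by
    intro z hz
    have hz' : (0 ≤ z (Fin.last d) ∧ z (Fin.last d) ≤ s - t) ∧
        ∑ i : Fin d, (z i.castSucc - (if i = 0 then z (Fin.last d)*a*s/(s^2-r^2) else 0))^2
          ≤ (z (Fin.last d))^2*r^2/(s^2-r^2) := hz
    obtain ⟨⟨h1, h2⟩, h3⟩ := hz'
    exact ⟨incl a s r t hr hsr ht1 ht2 p hp z h1 h2 h3, h1, h2⟩
  -- volume computations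
  have hv1 : volume E = volume S' :=
    (EuclideanSpace.volume_preserving_symm_measurableEquiv_toLp (Fin (d+1))).measure_preimage
      hmS'.nullMeasurableSet
  set m2e := MeasurableEquiv.piFinSuccAbove (fun _ : Fin (d+1) => ℝ) (Fin.last d) with hm2e
  have m2pres : MeasurePreserving m2e.symm :=
    (volume_preserving_piFinSuccAbove (fun _ : Fin (d+1) => ℝ) (Fin.last d)).symm
  set G : Set (ℝ × (Fin d → ℝ)) := m2e.symm ⁻¹' S' with hGdef0
  have hmG : MeasurableSet G := m2e.symm.measurable hmS'
  have hv2 : volume G = volume S' := m2pres.measure_preimage hmS'.nullMeasurableSet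
  have hGdef : G = {q : ℝ × (Fin d → ℝ) | (0 ≤ q.1 ∧ q.1 ≤ s - t) ∧
      ∑ i : Fin d, (q.2 i - (if i = 0 then q.1*a*s/(s^2-r^2) else 0))^2
        ≤ q.1^2*r^2/(s^2-r^2)} := by
    ext q
    have hlast : (m2e.symm q) (Fin.last d) = q.1 := by
      simp [hm2e, MeasurableEquiv.piFinSuccAbove, Fin.insertNth_apply_same]
    have hcs : ∀ j : Fin d, (m2e.symm q) (j.castSucc) = q.2 j := by
      intro j
      have hj : j.castSucc = (Fin.last d).succAbove j := by rw [Fin.succAbove_last]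
      rw [hj]
      simp [hm2e, MeasurableEquiv.piFinSuccAbove, Fin.insertNth_apply_succAbove]
    show (m2e.symm q) ∈ S' ↔ _
    rw [hS'def]
    simp only [Set.mem_setOf_eq, hlast, hcs]
  -- slice computation
  set F : ℝ → ENNReal := fun x => ENNReal.ofReal ((x*ρ)^d) * C with hF
  have hslice : ∀ x : ℝ, volume (Prod.mk x ⁻¹' G) = Set.indicator (Set.Icc 0 (s-t)) F x := by
    intro x
    by_cases hx : x ∈ Set.Icc (0:ℝ) (s-t)
    · rw [Set.indicator_of_mem hx]
      set v : EuclideanSpace ℝ (Fin d) := WithLp.toLp 2 (fun i => if i = 0 then x*a*s/(s^2-r^2) else 0) with hv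
      have hset : Prod.mk x ⁻¹' G =
          (MeasurableEquiv.toLp 2 (Fin d → ℝ)).symm.symm ⁻¹' (Metric.closedBall v (x*ρ)) := by
        ext f
        have hcoord : ∀ i : Fin d, ((MeasurableEquiv.toLp 2 (Fin d → ℝ)).symm.symm f) i = f i := by
          intro i; rfl
        simp only [Set.mem_preimage, hGdef, Set.mem_setOf_eq, Metric.mem_closedBall]
        rw [EuclideanSpace.dist_eq]
        simp only [hcoord, Real.dist_eq, sq_abs]
        have hxρ : 0 ≤ x*ρ := mul_nonneg hx.1 hρ0
        have hsq : ((x*ρ):ℝ)^2 = x^2*r^2/(s^2-r^2) := by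
          rw [mul_pow, hρ2]; ring
        have hs0 : (0:ℝ) ≤ ∑ i : Fin d, (f i - v i)^2 := by positivity
        constructor
        · rintro ⟨-, hsum⟩
          have h' : ∑ i : Fin d, (f i - v i)^2 ≤ (x*ρ)^2 := by rw [hsq]; exact hsum
          calc Real.sqrt (∑ i : Fin d, (f i - v i)^2) ≤ Real.sqrt ((x*ρ)^2) :=
                Real.sqrt_le_sqrt h'
            _ = x*ρ := Real.sqrt_sq hxρ
        · intro hdist
          refine ⟨⟨hx.1, hx.2⟩, ?_⟩
          rw [← hsq]
          calc ∑ i : Fin d, (f i - v i)^2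
              = (Real.sqrt (∑ i : Fin d, (f i - v i)^2))^2 := (Real.sq_sqrt hs0).symm
            _ ≤ (x*ρ)^2 := by
                have := Real.sqrt_nonneg (∑ i : Fin d, (f i - v i)^2)
                nlinarith [hdist]
      rw [hset,
        ((EuclideanSpace.volume_preserving_symm_measurableEquiv_toLp (Fin d)).symm).measure_preimage
          measurableSet_closedBall.nullMeasurableSet,
        Measure.addHaar_closedBall _ _ (mul_nonneg hx.1 hρ0), finrank_euclideanSpace_fin]
    · rw [Set.indicator_of_notMem hx]
      have hempty : Prod.mk x ⁻¹' G = ∅ := by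
        ext f
        simp only [Set.mem_preimage, hGdef, Set.mem_setOf_eq, Set.mem_empty_iff_false, iff_false]
        rw [Set.mem_Icc] at hx
        tauto
      rw [hempty, measure_empty]
  have hv3 : volume G = ∫⁻ x in Set.Icc (0:ℝ) (s-t), F x := by
    rw [show (volume : Measure (ℝ × (Fin d → ℝ))) = (volume : Measure ℝ).prod volume from rfl,
      Measure.prod_apply hmG]
    simp_rw [hslice]
    exact lintegral_indicator measurableSet_Icc F
  have hv5 : ∫⁻ x in Set.Icc (0:ℝ) (s-t), F x
      = ENNReal.ofReal ((s-t)^(d+1)/((d:ℝ)+1)) * (ENNReal.ofReal (ρ^d) * C) := by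
    calc ∫⁻ x in Set.Icc (0:ℝ) (s-t), F x
        = ∫⁻ x in Set.Icc (0:ℝ) (s-t), ENNReal.ofReal (x^d) * (ENNReal.ofReal (ρ^d) * C) := by
          refine setLIntegral_congr_fun measurableSet_Icc (fun x hx => ?_)
          simp only [hF]
          rw [mul_pow, ENNReal.ofReal_mul (pow_nonneg hx.1 d), mul_assoc]
      _ = (∫⁻ x in Set.Icc (0:ℝ) (s-t), ENNReal.ofReal (x^d)) * (ENNReal.ofReal (ρ^d) * C) := by
          exact lintegral_mul_const _ (by measurability)
      _ = ENNReal.ofReal ((s-t)^(d+1)/((d:ℝ)+1)) * (ENNReal.ofReal (ρ^d) * C) := by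
          rw [lint_pow _ hT0]
  have hC : C ≠ ⊤ := (measure_ball_lt_top).ne
  have hfinal : ENNReal.ofReal ((1 / (d + 1 : ℝ)) * C.toReal *
      r ^ d * (s - t) ^ (d + 1) / w ^ d) = volume E := by
    rw [hv1, ← hv2, hv3, hv5]
    rw [← ENNReal.ofReal_toReal hC]
    rw [← ENNReal.ofReal_mul (by positivity), ← ENNReal.ofReal_mul (by positivity)]
    congr 1
    rw [ENNReal.ofReal_toReal hC] -- keep C.toReal on left; undo
    rw [hρdef, div_pow]
    have hwd : w^d ≠ 0 := by positivity
    field_simp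
  calc ENNReal.ofReal ((1 / (d + 1 : ℝ)) * C.toReal * r ^ d * (s - t) ^ (d + 1) / w ^ d)
      = volume E := hfinal
    _ ≤ _ := measure_mono hEsub
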